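/- There exists a constant c > 0 such that for every integer n ≥ 2 and every real trigonometric polynomial q of degree at most n, i.e. q(θ) = a_0 + Σ_{k=1}^{n} (a_k cos(kθ) + b_k sin(kθ)) with real coefficients, the supremum of |q| over [0, 2π] is at most c·(log n) times the maximum of |q| over the 2n+2 equispaced angles θ_k = 2kπ/(2n+2) = kπ/(n+1), k = 0, 1, ..., 2n+1. -/

import Mathlib

open Complex Finset
open scoped Real

namespace WAMTrig

lemma sum_exp_eq_zero {N : ℕ} (hN : 0 < N) {p : ℤ} (hp : p ≠ 0) (hpN : |p| < N) :
    ∑ k ∈ Finset.range N, Complex.exp ((p : ℂ) * (2 * (π : ℝ) * k / N) * Complex.I) = 0 := by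
  have hNR : ((N : ℂ)) ≠ 0 := by exact_mod_cast hN.ne'
  have hπ : ((π:ℝ) : ℂ) ≠ 0 := by exact_mod_cast Real.pi_ne_zero
  set z : ℂ := Complex.exp ((p : ℂ) * (2 * (π : ℝ) / N) * Complex.I) with hz
  have hterm : ∀ k ∈ Finset.range N,
      Complex.exp ((p : ℂ) * (2 * (π : ℝ) * k / N) * Complex.I) = z ^ k := by
    intro k _
    rw [hz, ← Complex.exp_nat_mul]
    congr 1
    field_simp
  rw [Finset.sum_congr rfl hterm]
  have hz1 : z ≠ 1 := by
    intro h
    rw [hz, Complex.exp_eq_one_iff] at h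
    obtain ⟨m, hm⟩ := h
    have hpm : (p : ℂ) = (m : ℂ) * N := by
      field_simp at hm
      have h2 : (2 * ((π:ℝ):ℂ) * Complex.I) ≠ 0 := by simp [hπ, Complex.I_ne_zero]
      apply mul_right_cancel₀ h2
      linear_combination (2 * ((π:ℝ):ℂ) * Complex.I) * hm
    have hpmz : p = m * N := by exact_mod_cast hpm
    rcases eq_or_ne m 0 with rfl | hm0
    · simp at hpmz; exact hp hpmz
    · have : (N : ℤ) ≤ |p| := by
        rw [hpmz, abs_mul]
        have h1 : (1:ℤ) ≤ |m| := Int.one_le_abs hm0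
        have hNn : |(N:ℤ)| = N := abs_of_nonneg (by positivity)
        nlinarith [abs_nonneg (m:ℤ)]
      omega
  have hzN : z ^ N = 1 := by
    rw [hz, ← Complex.exp_nat_mul]
    have he : (N : ℂ) * ((p : ℂ) * (2 * (π : ℝ) / N) * Complex.I)
        = (p : ℂ) * (2 * (π : ℝ) * Complex.I) := by
      field_simp
    rw [he]
    exact_mod_cast Complex.exp_int_mul_two_pi_mul_I p
  rw [geom_sum_eq hz1, hzN]
  simp

lemma sum_exp {N : ℕ} (hN : 0 < N) {p : ℤ} (hpN : |p| < N) :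
    ∑ k ∈ Finset.range N, Complex.exp ((p : ℂ) * (2 * (π : ℝ) * k / N) * Complex.I)
      = if p = 0 then (N : ℂ) else 0 := by
  rcases eq_or_ne p 0 with rfl | hp
  · simp
  · rw [if_neg hp]; exact sum_exp_eq_zero hN hp hpN

/-- The Dirichlet kernel of degree `n`, as a complex-valued function. -/
noncomputable def Dker (n : ℕ) (u : ℝ) : ℂ :=
  Complex.exp (-(n : ℂ) * u * Complex.I) *
    ∑ j ∈ Finset.range (2 * n + 1), Complex.exp ((u : ℂ) * Complex.I) ^ j

lemma Dker_eq_sum (n : ℕ) (u : ℝ) :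
    Dker n u = ∑ j ∈ Finset.range (2 * n + 1),
      Complex.exp ((((j : ℤ) - n : ℤ) : ℂ) * u * Complex.I) := by
  rw [Dker, Finset.mul_sum]
  refine Finset.sum_congr rfl fun j _ => ?_
  rw [← Complex.exp_nat_mul, ← Complex.exp_add]
  congr 1
  push_cast
  ring

/-- Exact reconstruction of exponentials: key orthogonality identity. -/
lemma sum_exp_mul_Dker (n : ℕ) {m : ℤ} (hm : |m| ≤ n) (θ : ℝ) :
    ∑ k ∈ Finset.range (2 * n + 2),
        Complex.exp ((m : ℂ) * (2 * (π : ℝ) * k / (2 * n + 2)) * Complex.I)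
          * Dker n (θ - 2 * (π : ℝ) * k / (2 * n + 2))
      = (2 * n + 2 : ℕ) * Complex.exp ((m : ℂ) * θ * Complex.I) := by
  have hN : 0 < 2 * n + 2 := by omega
  obtain ⟨hm1, hm2⟩ := abs_le.mp hm
  have hj0 : ((m + n).toNat : ℤ) = m + n := Int.toNat_of_nonneg (by omega)
  calc ∑ k ∈ Finset.range (2 * n + 2),
        Complex.exp ((m : ℂ) * (2 * (π : ℝ) * k / (2 * n + 2)) * Complex.I)
          * Dker n (θ - 2 * (π : ℝ) * k / (2 * n + 2))
      = ∑ j ∈ Finset.range (2 * n + 1),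
          Complex.exp ((((j : ℤ) - n : ℤ) : ℂ) * θ * Complex.I) *
          ∑ k ∈ Finset.range (2 * n + 2),
            Complex.exp (((m - ((j : ℤ) - n) : ℤ) : ℂ) * (2 * (π : ℝ) * (k:ℕ) / ((2 * n + 2 : ℕ))) * Complex.I) := by
        simp only [Dker_eq_sum, Finset.mul_sum]
        rw [Finset.sum_comm]
        refine Finset.sum_congr rfl fun j _ => ?_
        refine Finset.sum_congr rfl fun k _ => ?_
        rw [← Complex.exp_add, ← Complex.exp_add]
        congr 1
        push_cast
        ring
    _ = (2 * n + 2 : ℕ) * Complex.exp ((m : ℂ) * θ * Complex.I) := by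
        have hsum : ∀ j ∈ Finset.range (2 * n + 1),
            Complex.exp ((((j : ℤ) - n : ℤ) : ℂ) * θ * Complex.I) *
              ∑ k ∈ Finset.range (2 * n + 2),
                Complex.exp (((m - ((j : ℤ) - n) : ℤ) : ℂ) * (2 * (π : ℝ) * (k:ℕ) / ((2 * n + 2 : ℕ))) * Complex.I)
            = if j = (m + n).toNat then
                ((2 * n + 2 : ℕ) : ℂ) * Complex.exp ((((j : ℤ) - n : ℤ) : ℂ) * θ * Complex.I) else 0 := by
          intro j hj
          rw [Finset.mem_range] at hj
          rw [sum_exp hN (by rw [abs_lt]; omega)]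
          by_cases hcase : m - ((j : ℤ) - n) = 0
          · rw [if_pos hcase, if_pos (by omega), mul_comm]
          · rw [if_neg hcase, if_neg (by omega), mul_zero]
        rw [Finset.sum_congr rfl hsum, Finset.sum_ite_eq' (Finset.range (2 * n + 1)) ((m + n).toNat)
          (fun j => ((2 * n + 2 : ℕ) : ℂ) * Complex.exp ((((j : ℤ) - n : ℤ) : ℂ) * θ * Complex.I))]
        rw [if_pos (Finset.mem_range.mpr (by omega))]
        congr 2
        push_cast [hj0]
        ring


lemma norm_exp_real_mul_I (x : ℝ) : ‖Complex.exp ((x : ℂ) * Complex.I)‖ = 1 := by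
  simpa using Complex.abs_exp_ofReal_mul_I x

lemma Dker_norm_le_card (n : ℕ) (u : ℝ) : ‖Dker n u‖ ≤ 2 * n + 1 := by
  rw [Dker, norm_mul]
  have h1 : ‖Complex.exp (-(n : ℂ) * u * Complex.I)‖ = 1 := by
    have : (-(n : ℂ) * u * Complex.I) = ((-(n * u) : ℝ) : ℂ) * Complex.I := by push_cast; ring
    rw [this, norm_exp_real_mul_I]
  rw [h1, one_mul]
  calc ‖∑ j ∈ Finset.range (2 * n + 1), Complex.exp ((u : ℂ) * Complex.I) ^ j‖
      ≤ ∑ j ∈ Finset.range (2 * n + 1), ‖Complex.exp ((u : ℂ) * Complex.I) ^ j‖ :=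
        norm_sum_le _ _
    _ = ∑ j ∈ Finset.range (2 * n + 1), 1 := by
        refine Finset.sum_congr rfl fun j _ => ?_
        rw [norm_pow, norm_exp_real_mul_I, one_pow]
    _ = 2 * n + 1 := by simp
    _ ≤ 2 * n + 1 := le_refl _

lemma norm_exp_mul_I_sub_one (u : ℝ) :
    ‖Complex.exp ((u : ℂ) * Complex.I) - 1‖ = 2 * |Real.sin (u / 2)| := by
  have key : Complex.exp ((u : ℂ) * Complex.I) - 1
      = Complex.exp (((u / 2 : ℝ) : ℂ) * Complex.I) *
        (2 * ((Real.sin (u / 2) : ℝ) : ℂ) * Complex.I) := by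
    have h1 : Complex.exp ((u : ℂ) * Complex.I)
        = Complex.exp (((u / 2 : ℝ) : ℂ) * Complex.I) * Complex.exp (((u / 2 : ℝ) : ℂ) * Complex.I) := by
      rw [← Complex.exp_add]; congr 1; push_cast; ring
    have h2 : (1 : ℂ) = Complex.exp (((u / 2 : ℝ) : ℂ) * Complex.I) *
        Complex.exp (((-(u / 2) : ℝ) : ℂ) * Complex.I) := by
      rw [← Complex.exp_add]
      have : ((u / 2 : ℝ) : ℂ) * Complex.I + ((-(u / 2) : ℝ) : ℂ) * Complex.I = 0 := by
        push_cast; ring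
      rw [this, Complex.exp_zero]
    rw [h1]
    rw [Complex.exp_mul_I, Complex.ofReal_sin]
    have hs : Complex.sin (((u / 2 : ℝ) : ℂ)) ^ 2 + Complex.cos (((u / 2 : ℝ) : ℂ)) ^ 2 = 1 :=
      Complex.sin_sq_add_cos_sq _
    have hI : Complex.I ^ 2 = -1 := Complex.I_sq
    linear_combination hs - Complex.sin (((u / 2 : ℝ) : ℂ)) ^ 2 * hI
  rw [key, norm_mul, norm_exp_real_mul_I, one_mul]
  simp [norm_mul, Complex.norm_real, Real.norm_eq_abs, -Complex.ofReal_sin]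

lemma Dker_norm_le_inv_sin (n : ℕ) {u : ℝ} (h : Real.sin (u / 2) ≠ 0) :
    ‖Dker n u‖ ≤ 1 / |Real.sin (u / 2)| := by
  have habs : 0 < |Real.sin (u / 2)| := abs_pos.mpr h
  have hz1 : Complex.exp ((u : ℂ) * Complex.I) ≠ 1 := by
    intro hz
    rw [Complex.exp_eq_one_iff] at hz
    obtain ⟨m, hm⟩ := hz
    have hu : (u : ℂ) = (m : ℂ) * (2 * (π : ℝ)) := by
      apply mul_right_cancel₀ Complex.I_ne_zero
      rw [hm]; push_cast; ring
    have hu' : u = m * (2 * π) := by exact_mod_cast hu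
    apply h
    have : u / 2 = (m : ℝ) * π := by rw [hu']; ring
    rw [this]
    exact Real.sin_int_mul_pi m
  have h1 : ‖Complex.exp (-(n : ℂ) * u * Complex.I)‖ = 1 := by
    have : (-(n : ℂ) * u * Complex.I) = ((-(n * u) : ℝ) : ℂ) * Complex.I := by push_cast; ring
    rw [this, norm_exp_real_mul_I]
  rw [Dker, norm_mul, h1, one_mul, geom_sum_eq hz1, norm_div, norm_exp_mul_I_sub_one]
  rw [div_le_div_iff₀ (by linarith) habs]
  calc ‖Complex.exp ((u:ℂ) * Complex.I) ^ (2 * n + 1) - 1‖ * |Real.sin (u / 2)|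
      ≤ (‖Complex.exp ((u:ℂ) * Complex.I) ^ (2 * n + 1)‖ + 1) * |Real.sin (u / 2)| := by
        apply mul_le_mul_of_nonneg_right _ (abs_nonneg _)
        calc ‖Complex.exp ((u:ℂ) * Complex.I) ^ (2 * n + 1) - 1‖
            ≤ ‖Complex.exp ((u:ℂ) * Complex.I) ^ (2 * n + 1)‖ + ‖(1:ℂ)‖ := norm_sub_le _ _
          _ = ‖Complex.exp ((u:ℂ) * Complex.I) ^ (2 * n + 1)‖ + 1 := by rw [norm_one]
    _ = 2 * |Real.sin (u / 2)| := by
        rw [norm_pow, norm_exp_real_mul_I, one_pow]; ring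
    _ ≤ 1 * (2 * |Real.sin (u / 2)|) := by linarith


lemma Dker_periodic (n : ℕ) (u : ℝ) : Dker n (u + 2 * π) = Dker n u := by
  have he : Complex.exp (((u + 2 * π : ℝ) : ℂ) * Complex.I) = Complex.exp ((u : ℂ) * Complex.I) := by
    push_cast
    rw [add_mul, Complex.exp_add, Complex.exp_two_pi_mul_I, mul_one]
  rw [Dker, Dker, he]
  congr 1
  calc Complex.exp (-(n:ℂ) * ((u + 2 * π : ℝ) : ℂ) * Complex.I)
      = Complex.exp (-(n:ℂ) * (u:ℂ) * Complex.I + ((-(n:ℤ) : ℤ) : ℂ) * (2 * (π:ℝ) * Complex.I)) := by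
        congr 1; push_cast; ring
    _ = Complex.exp (-(n:ℂ) * (u:ℂ) * Complex.I) * Complex.exp (((-(n:ℤ) : ℤ) : ℂ) * (2 * (π:ℝ) * Complex.I)) :=
        Complex.exp_add _ _
    _ = Complex.exp (-(n:ℂ) * (u:ℂ) * Complex.I) := by
        rw [Complex.exp_int_mul_two_pi_mul_I, mul_one]

/-- The Lebesgue function: sum of kernel norms over the equispaced grid. -/
noncomputable def Leb (n : ℕ) (θ : ℝ) : ℝ :=
  ∑ k ∈ Finset.range (2 * n + 2), ‖Dker n (θ - 2 * π * k / (2 * n + 2))‖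

lemma Leb_shift (n : ℕ) (θ : ℝ) : Leb n (θ + 2 * π / (2 * n + 2)) = Leb n θ := by
  have hNpos : (0:ℝ) < 2 * (n:ℝ) + 2 := by positivity
  set F : ℕ → ℝ := fun k => ‖Dker n (θ + 2 * π / (2 * n + 2) - 2 * π * k / (2 * n + 2))‖ with hF
  set G : ℕ → ℝ := fun k => ‖Dker n (θ - 2 * π * k / (2 * n + 2))‖ with hG
  have hFG : ∀ k : ℕ, F (k + 1) = G k := by
    intro k
    rw [hF, hG]
    simp only
    congr 2
    push_cast
    field_simp
    ring
  have hF0 : F 0 = G (2 * n + 1) := by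
    rw [hF, hG]
    simp only
    have harg : θ - 2 * π * ((2 * n + 1 : ℕ) : ℝ) / (2 * n + 2) + 2 * π
        = θ + 2 * π / (2 * n + 2) - 2 * π * ((0:ℕ):ℝ) / (2 * n + 2) := by
      push_cast
      field_simp
      ring
    rw [← harg, Dker_periodic]
  have e1 : Leb n (θ + 2 * π / (2 * n + 2)) = ∑ k ∈ Finset.range (2 * n + 1 + 1), F k := rfl
  have e2 : Leb n θ = ∑ k ∈ Finset.range (2 * n + 1 + 1), G k := rfl
  rw [e1, e2]
  conv_lhs => rw [Finset.sum_range_succ']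
  conv_rhs => rw [Finset.sum_range_succ]
  rw [hF0]
  congr 1
  exact Finset.sum_congr rfl fun k _ => hFG k


lemma Leb_shift_nat (n : ℕ) (θ : ℝ) (j : ℕ) :
    Leb n (θ - j * (2 * π / (2 * n + 2))) = Leb n θ := by
  induction j with
  | zero => simp
  | succ j ih =>
    have e : θ - j * (2 * π / (2 * n + 2))
        = (θ - (j + 1 : ℕ) * (2 * π / (2 * n + 2))) + 2 * π / (2 * n + 2) := by
      push_cast; ring
    rw [← ih, e, Leb_shift]

/-- `sin x ≥ (2/π) a` whenever `0 < a ≤ min(x, π - x)`. -/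
lemma sin_ge_aux {x a : ℝ} (ha : 0 < a) (hax : a ≤ x) (hax' : a ≤ π - x) :
    2 / π * a ≤ Real.sin x := by
  have hπ := Real.pi_pos
  have h2π : (0:ℝ) < 2 / π := by positivity
  rcases le_or_gt x (π / 2) with hc | hc
  · calc 2 / π * a ≤ 2 / π * x := by nlinarith
      _ ≤ Real.sin x := Real.mul_le_sin (by linarith) hc
  · calc 2 / π * a ≤ 2 / π * (π - x) := by nlinarith
      _ ≤ Real.sin (π - x) := Real.mul_le_sin (by linarith) (by linarith)
      _ = Real.sin x := Real.sin_pi_sub x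

set_option maxHeartbeats 1000000 in
lemma term_bound (n : ℕ) {θ : ℝ} (hθ0 : 0 ≤ θ) (hθh : θ ≤ 2 * π / (2 * n + 2))
    {k : ℕ} (hk2 : 2 ≤ k) (hkN : k < 2 * n + 2) :
    ‖Dker n (θ - 2 * π * k / (2 * n + 2))‖
      ≤ (2 * (n:ℝ) + 2) / 2 * (1 / ((k:ℝ) - 1) + 1 / ((2 * (n:ℝ) + 2) - k)) := by
  have hπ := Real.pi_pos
  set N : ℝ := 2 * (n:ℝ) + 2 with hN
  have hNpos : (0:ℝ) < N := by rw [hN]; positivity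
  set h : ℝ := 2 * π / N with hh
  have hhpos : 0 < h := by rw [hh]; positivity
  have hNh : N * h = 2 * π := by rw [hh]; field_simp
  have hkh : 2 * π * (k:ℝ) / N = (k:ℝ) * h := by rw [hh]; field_simp
  clear_value N h
  have hkr1 : (1:ℝ) ≤ (k:ℝ) - 1 := by
    have : (2:ℝ) ≤ (k:ℝ) := by exact_mod_cast hk2
    linarith
  have hkrN : (1:ℝ) ≤ N - k := by
    have : (k:ℝ) ≤ 2 * (n:ℝ) + 1 := by exact_mod_cast Nat.lt_succ_iff.mp hkN
    rw [hN]; linarith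
  set x : ℝ := ((k:ℝ) * h - θ) / 2 with hx
  clear_value x
  have hu : θ - 2 * π * k / N = -(2 * x) := by rw [hx, ← hkh]; ring
  have hx_lb : ((k:ℝ) - 1) * h / 2 ≤ x := by rw [hx]; linarith
  have hx_ub : x ≤ (k:ℝ) * h / 2 := by rw [hx]; linarith
  have hprod1 : 1 * h ≤ ((k:ℝ) - 1) * h := mul_le_mul_of_nonneg_right hkr1 hhpos.le
  have hprod2 : 1 * h ≤ (N - (k:ℝ)) * h := mul_le_mul_of_nonneg_right hkrN hhpos.le
  have hx_pos : 0 < x := by nlinarith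
  set d : ℝ := min ((k:ℝ) - 1) (N - (k:ℝ)) with hd
  have hd1 : 1 ≤ d := le_min hkr1 hkrN
  have hdk1 : d ≤ (k:ℝ) - 1 := min_le_left _ _
  have hdkN : d ≤ N - (k:ℝ) := min_le_right _ _
  clear_value d
  have hdprod1 : d * h ≤ ((k:ℝ) - 1) * h := mul_le_mul_of_nonneg_right hdk1 hhpos.le
  have hdprod2 : d * h ≤ (N - (k:ℝ)) * h := mul_le_mul_of_nonneg_right hdkN hhpos.le
  have hmin1 : d * h / 2 ≤ x := by nlinarith
  have hmin2 : d * h / 2 ≤ π - x := by nlinarith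
  have hdh_pos : 0 < d * h / 2 := by nlinarith
  have hsin : 2 / π * (d * h / 2) ≤ Real.sin x := sin_ge_aux hdh_pos hmin1 hmin2
  have hval : 2 / π * (d * h / 2) = d * h / π := by ring
  have hsinpos : 0 < Real.sin x := by
    refine lt_of_lt_of_le ?_ hsin
    positivity
  have habs : |Real.sin ((θ - 2 * π * k / N) / 2)| = Real.sin x := by
    rw [hu]
    have e : -(2 * x) / 2 = -x := by ring
    rw [e, Real.sin_neg, abs_neg, abs_of_pos hsinpos]
  have hne : Real.sin ((θ - 2 * π * k / N) / 2) ≠ 0 := by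
    intro hzero
    rw [hzero] at habs
    simp at habs
    linarith
  have hsinN : 2 * d / N ≤ Real.sin x := by
    refine le_trans ?_ hsin
    rw [hval, div_le_div_iff₀ hNpos hπ]
    nlinarith
  calc ‖Dker n (θ - 2 * π * k / N)‖
      ≤ 1 / |Real.sin ((θ - 2 * π * k / N) / 2)| := Dker_norm_le_inv_sin n hne
    _ = 1 / Real.sin x := by rw [habs]
    _ ≤ 1 / (2 * d / N) := one_div_le_one_div_of_le (by positivity) hsinN
    _ = N / (2 * d) := by
        rw [one_div_div]
    _ ≤ N / 2 * (1 / ((k:ℝ) - 1) + 1 / (N - k)) := by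
        have hdpos : (0:ℝ) < d := by linarith
        have hcases : 1 / d ≤ 1 / ((k:ℝ) - 1) + 1 / (N - k) := by
          rcases min_choice ((k:ℝ) - 1) (N - (k:ℝ)) with hmc | hmc
          · rw [hd, hmc]
            have : 0 < 1 / (N - (k:ℝ)) := by positivity
            linarith
          · rw [hd, hmc]
            have : 0 < 1 / ((k:ℝ) - 1) := by positivity
            linarith
        calc N / (2 * d) = N / 2 * (1 / d) := by
              ring
          _ ≤ N / 2 * (1 / ((k:ℝ) - 1) + 1 / (N - k)) :=
              mul_le_mul_of_nonneg_left hcases (by positivity)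


lemma harmonic_real (m : ℕ) : ∑ j ∈ Finset.range m, 1 / ((j:ℝ) + 1) = (harmonic m : ℝ) := by
  rw [harmonic]
  push_cast
  refine Finset.sum_congr rfl fun j _ => ?_
  rw [one_div]

lemma Leb_le (n : ℕ) {θ : ℝ} (hθ0 : 0 ≤ θ) (hθh : θ ≤ 2 * π / (2 * n + 2)) :
    Leb n θ ≤ (2 * (n:ℝ) + 2) * (3 + Real.log (2 * (n:ℝ) + 2)) := by
  have hπ := Real.pi_pos
  set N : ℝ := 2 * (n:ℝ) + 2 with hN
  have hNpos : (0:ℝ) < N := by rw [hN]; positivity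
  -- split the sum
  have hsplit : Leb n θ = (‖Dker n (θ - 2 * π * (0:ℕ) / (2 * n + 2))‖
      + ‖Dker n (θ - 2 * π * (1:ℕ) / (2 * n + 2))‖)
      + ∑ k ∈ Finset.Ico 2 (2 * n + 2), ‖Dker n (θ - 2 * π * k / (2 * n + 2))‖ := by
    rw [Leb, Finset.range_eq_Ico,
      ← Finset.sum_Ico_consecutive _ (by omega : 0 ≤ 2) (by omega : 2 ≤ 2 * n + 2)]
    congr 1
    rw [← Finset.range_eq_Ico]
    rw [Finset.sum_range_succ, Finset.sum_range_one]
  -- harmonic sums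
  have hS1 : ∑ k ∈ Finset.Ico 2 (2 * n + 2), 1 / ((k:ℝ) - 1) = (harmonic (2 * n) : ℝ) := by
    rw [Finset.sum_Ico_eq_sum_range, ← harmonic_real (2 * n)]
    have : 2 * n + 2 - 2 = 2 * n := by omega
    rw [this]
    refine Finset.sum_congr rfl fun j _ => ?_
    push_cast
    ring_nf
  have hS2 : ∑ k ∈ Finset.Ico 2 (2 * n + 2), 1 / (N - (k:ℝ)) = (harmonic (2 * n) : ℝ) := by
    rw [Finset.sum_Ico_eq_sum_range, ← harmonic_real (2 * n)]
    have h2n : 2 * n + 2 - 2 = 2 * n := by omega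
    rw [h2n]
    rw [← Finset.sum_range_reflect (fun j => 1 / ((j:ℝ) + 1)) (2 * n)]
    refine Finset.sum_congr rfl fun j hj => ?_
    rw [Finset.mem_range] at hj
    have hcast : ((2 * n - 1 - j : ℕ) : ℝ) = 2 * (n:ℝ) - 1 - j := by
      have : (2 * n - 1 - j : ℕ) = 2 * n - (1 + j) := by omega
      rw [this, Nat.cast_sub (by omega)]
      push_cast
      ring
    rw [hcast, hN]
    push_cast
    ring_nf
  have hharm : (harmonic (2 * n) : ℝ) ≤ 1 + Real.log N := by
    refine (harmonic_le_one_add_log (2 * n)).trans ?_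
    have hlog : Real.log ((2 * n : ℕ) : ℝ) ≤ Real.log N := by
      rcases Nat.eq_zero_or_pos n with rfl | hn
      · simp only [Nat.mul_zero, Nat.cast_zero, Real.log_zero]
        have : (1:ℝ) ≤ N := by rw [hN]; push_cast; linarith
        exact Real.log_nonneg this
      · apply Real.log_le_log (by positivity)
        rw [hN]; push_cast; linarith
    linarith
  -- bound the tail
  have htail : ∑ k ∈ Finset.Ico 2 (2 * n + 2), ‖Dker n (θ - 2 * π * k / (2 * n + 2))‖
      ≤ N / 2 * (2 * (1 + Real.log N)) := by
    calc ∑ k ∈ Finset.Ico 2 (2 * n + 2), ‖Dker n (θ - 2 * π * k / (2 * n + 2))‖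
        ≤ ∑ k ∈ Finset.Ico 2 (2 * n + 2), N / 2 * (1 / ((k:ℝ) - 1) + 1 / (N - k)) := by
          refine Finset.sum_le_sum fun k hk => ?_
          rw [Finset.mem_Ico] at hk
          rw [hN]
          exact term_bound n hθ0 hθh hk.1 hk.2
      _ = N / 2 * ((harmonic (2 * n) : ℝ) + (harmonic (2 * n) : ℝ)) := by
          rw [← Finset.mul_sum, Finset.sum_add_distrib, hS1, hS2]
      _ ≤ N / 2 * (2 * (1 + Real.log N)) := by
          apply mul_le_mul_of_nonneg_left _ (by positivity)
          linarith
  have hhead0 : ‖Dker n (θ - 2 * π * (0:ℕ) / (2 * n + 2))‖ ≤ 2 * (n:ℝ) + 1 :=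
    Dker_norm_le_card n _
  have hhead1 : ‖Dker n (θ - 2 * π * (1:ℕ) / (2 * n + 2))‖ ≤ 2 * (n:ℝ) + 1 :=
    Dker_norm_le_card n _
  have hlogN : 0 ≤ Real.log N := Real.log_nonneg (by rw [hN]; push_cast; linarith)
  rw [hsplit]
  have expand : N / 2 * (2 * (1 + Real.log N)) = N + N * Real.log N := by ring
  have target : (2 * (n:ℝ) + 1) + (2 * (n:ℝ) + 1) + (N + N * Real.log N)
      ≤ N * (3 + Real.log N) := by
    have : N * (3 + Real.log N) = 3 * N + N * Real.log N := by ring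
    rw [this, hN]
    push_cast
    linarith
  linarith [htail, hhead0, hhead1, expand, target]

/-- Variant with real-cast exponents. -/
lemma sum_exp_mul_Dker' (n : ℕ) {m : ℤ} (hm : |m| ≤ n) (θ : ℝ) :
    ∑ k ∈ Finset.range (2 * n + 2),
        Complex.exp ((((m : ℝ) * (2 * π * k / (2 * n + 2)) : ℝ) : ℂ) * Complex.I)
          * Dker n (θ - 2 * π * k / (2 * n + 2))
      = ((2 * n + 2 : ℕ) : ℂ) * Complex.exp ((((m : ℝ) * θ : ℝ) : ℂ) * Complex.I) := by
  have hL : ∑ k ∈ Finset.range (2 * n + 2),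
        Complex.exp ((((m : ℝ) * (2 * π * k / (2 * n + 2)) : ℝ) : ℂ) * Complex.I)
          * Dker n (θ - 2 * π * k / (2 * n + 2))
      = ∑ k ∈ Finset.range (2 * n + 2),
        Complex.exp ((m : ℂ) * (2 * (π : ℝ) * k / (2 * n + 2)) * Complex.I)
          * Dker n (θ - 2 * (π : ℝ) * k / (2 * n + 2)) := by
    refine Finset.sum_congr rfl fun k _ => ?_
    congr 2
    push_cast
    ring
  rw [hL, sum_exp_mul_Dker n hm θ]
  congr 2
  push_cast
  ring

lemma ofReal_cos_eq (x : ℝ) : ((Real.cos x : ℝ) : ℂ)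
    = (Complex.exp ((x : ℂ) * Complex.I) + Complex.exp (((-x : ℝ) : ℂ) * Complex.I)) / 2 := by
  rw [Complex.ofReal_cos]
  simp only [Complex.cos]
  push_cast
  ring_nf

lemma ofReal_sin_eq (x : ℝ) : ((Real.sin x : ℝ) : ℂ)
    = (Complex.exp (((-x : ℝ) : ℂ) * Complex.I) - Complex.exp ((x : ℂ) * Complex.I))
        * Complex.I / 2 := by
  rw [Complex.ofReal_sin]
  simp only [Complex.sin]
  push_cast
  ring_nf


lemma sum_exp_mul_Dker'' (n : ℕ) (c : ℝ) (m : ℤ) (hc : c = (m : ℝ)) (hm : |m| ≤ n) (θ : ℝ) :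
    ∑ k ∈ Finset.range (2 * n + 2),
        Complex.exp (((c * (2 * π * k / (2 * n + 2)) : ℝ) : ℂ) * Complex.I)
          * Dker n (θ - 2 * π * k / (2 * n + 2))
      = ((2 * n + 2 : ℕ) : ℂ) * Complex.exp (((c * θ : ℝ) : ℂ) * Complex.I) := by
  subst hc
  exact sum_exp_mul_Dker' n hm θ

lemma one_sum (n : ℕ) (θ : ℝ) :
    ∑ k ∈ Finset.range (2 * n + 2), Dker n (θ - 2 * π * k / (2 * n + 2))
      = ((2 * n + 2 : ℕ) : ℂ) := by
  have h := sum_exp_mul_Dker'' n 0 0 (by norm_num) (by simp) θ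
  simpa using h

lemma cos_sum (n : ℕ) {m : ℕ} (hm : m ≤ n) (θ : ℝ) :
    ∑ k ∈ Finset.range (2 * n + 2),
        ((Real.cos ((m : ℝ) * (2 * π * k / (2 * n + 2))) : ℝ) : ℂ)
          * Dker n (θ - 2 * π * k / (2 * n + 2))
      = ((2 * n + 2 : ℕ) : ℂ) * ((Real.cos ((m : ℝ) * θ) : ℝ) : ℂ) := by
  have hm1 : |(m : ℤ)| ≤ (n : ℤ) := by
    rw [_root_.abs_of_nonneg (by positivity : (0:ℤ) ≤ (m:ℤ))]; exact_mod_cast hm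
  have h1 := sum_exp_mul_Dker'' n ((m : ℝ)) ((m : ℤ)) (by push_cast; ring) (by exact_mod_cast hm1) θ
  have h2 := sum_exp_mul_Dker'' n (-(m : ℝ)) (-(m : ℤ)) (by push_cast; ring)
    (by rw [abs_neg]; exact_mod_cast hm1) θ
  calc ∑ k ∈ Finset.range (2 * n + 2),
        ((Real.cos ((m : ℝ) * (2 * π * k / (2 * n + 2))) : ℝ) : ℂ)
          * Dker n (θ - 2 * π * k / (2 * n + 2))
      = ∑ k ∈ Finset.range (2 * n + 2),
          (Complex.exp ((((m : ℝ) * (2 * π * k / (2 * n + 2)) : ℝ) : ℂ) * Complex.I)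
              * Dker n (θ - 2 * π * k / (2 * n + 2))
            + Complex.exp (((-(m : ℝ) * (2 * π * k / (2 * n + 2)) : ℝ) : ℂ) * Complex.I)
              * Dker n (θ - 2 * π * k / (2 * n + 2))) / 2 := by
        refine Finset.sum_congr rfl fun k _ => ?_
        rw [ofReal_cos_eq]
        have e : (-((m : ℝ) * (2 * π * k / (2 * n + 2))) : ℝ)
            = (-(m : ℝ) * (2 * π * k / (2 * n + 2)) : ℝ) := by ring
        rw [e]
        ring
    _ = (∑ k ∈ Finset.range (2 * n + 2),
          Complex.exp ((((m : ℝ) * (2 * π * k / (2 * n + 2)) : ℝ) : ℂ) * Complex.I)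
            * Dker n (θ - 2 * π * k / (2 * n + 2))
        + ∑ k ∈ Finset.range (2 * n + 2),
          Complex.exp (((-(m : ℝ) * (2 * π * k / (2 * n + 2)) : ℝ) : ℂ) * Complex.I)
            * Dker n (θ - 2 * π * k / (2 * n + 2))) / 2 := by
        rw [← Finset.sum_div, Finset.sum_add_distrib]
    _ = (((2 * n + 2 : ℕ) : ℂ) * Complex.exp ((((m : ℝ) * θ : ℝ) : ℂ) * Complex.I)
        + ((2 * n + 2 : ℕ) : ℂ) * Complex.exp (((-(m : ℝ) * θ : ℝ) : ℂ) * Complex.I)) / 2 := by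
        rw [h1, h2]
    _ = ((2 * n + 2 : ℕ) : ℂ) * ((Real.cos ((m : ℝ) * θ) : ℝ) : ℂ) := by
        rw [ofReal_cos_eq]
        have e : (-((m : ℝ) * θ) : ℝ) = (-(m : ℝ) * θ : ℝ) := by ring
        rw [e]
        ring

lemma sin_sum (n : ℕ) {m : ℕ} (hm : m ≤ n) (θ : ℝ) :
    ∑ k ∈ Finset.range (2 * n + 2),
        ((Real.sin ((m : ℝ) * (2 * π * k / (2 * n + 2))) : ℝ) : ℂ)
          * Dker n (θ - 2 * π * k / (2 * n + 2))
      = ((2 * n + 2 : ℕ) : ℂ) * ((Real.sin ((m : ℝ) * θ) : ℝ) : ℂ) := by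
  have hm1 : |(m : ℤ)| ≤ (n : ℤ) := by
    rw [_root_.abs_of_nonneg (by positivity : (0:ℤ) ≤ (m:ℤ))]; exact_mod_cast hm
  have h1 := sum_exp_mul_Dker'' n ((m : ℝ)) ((m : ℤ)) (by push_cast; ring) (by exact_mod_cast hm1) θ
  have h2 := sum_exp_mul_Dker'' n (-(m : ℝ)) (-(m : ℤ)) (by push_cast; ring)
    (by rw [abs_neg]; exact_mod_cast hm1) θ
  calc ∑ k ∈ Finset.range (2 * n + 2),
        ((Real.sin ((m : ℝ) * (2 * π * k / (2 * n + 2))) : ℝ) : ℂ)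
          * Dker n (θ - 2 * π * k / (2 * n + 2))
      = ∑ k ∈ Finset.range (2 * n + 2),
          (Complex.exp (((-(m : ℝ) * (2 * π * k / (2 * n + 2)) : ℝ) : ℂ) * Complex.I)
              * Dker n (θ - 2 * π * k / (2 * n + 2))
            - Complex.exp ((((m : ℝ) * (2 * π * k / (2 * n + 2)) : ℝ) : ℂ) * Complex.I)
              * Dker n (θ - 2 * π * k / (2 * n + 2))) * Complex.I / 2 := by
        refine Finset.sum_congr rfl fun k _ => ?_
        rw [ofReal_sin_eq]
        have e : (-((m : ℝ) * (2 * π * k / (2 * n + 2))) : ℝ)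
            = (-(m : ℝ) * (2 * π * k / (2 * n + 2)) : ℝ) := by ring
        rw [e]
        ring
    _ = (∑ k ∈ Finset.range (2 * n + 2),
          Complex.exp (((-(m : ℝ) * (2 * π * k / (2 * n + 2)) : ℝ) : ℂ) * Complex.I)
            * Dker n (θ - 2 * π * k / (2 * n + 2))
        - ∑ k ∈ Finset.range (2 * n + 2),
          Complex.exp ((((m : ℝ) * (2 * π * k / (2 * n + 2)) : ℝ) : ℂ) * Complex.I)
            * Dker n (θ - 2 * π * k / (2 * n + 2))) * Complex.I / 2 := by
        rw [← Finset.sum_div, ← Finset.sum_mul, Finset.sum_sub_distrib]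
    _ = (((2 * n + 2 : ℕ) : ℂ) * Complex.exp (((-(m : ℝ) * θ : ℝ) : ℂ) * Complex.I)
        - ((2 * n + 2 : ℕ) : ℂ) * Complex.exp ((((m : ℝ) * θ : ℝ) : ℂ) * Complex.I))
          * Complex.I / 2 := by
        rw [h1, h2]
    _ = ((2 * n + 2 : ℕ) : ℂ) * ((Real.sin ((m : ℝ) * θ) : ℝ) : ℂ) := by
        rw [ofReal_sin_eq]
        have e : (-((m : ℝ) * θ) : ℝ) = (-(m : ℝ) * θ : ℝ) := by ring
        rw [e]
        ring


lemma reconstruct (n : ℕ) (a b : ℕ → ℝ) (q : ℝ → ℝ)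
    (hq : ∀ φ : ℝ, q φ = a 0 + ∑ j ∈ Finset.Icc 1 n,
        (a j * Real.cos (j * φ) + b j * Real.sin (j * φ)))
    (θ : ℝ) :
    ((2 * n + 2 : ℕ) : ℂ) * ((q θ : ℝ) : ℂ)
      = ∑ k ∈ Finset.range (2 * n + 2),
          ((q (2 * π * k / (2 * n + 2)) : ℝ) : ℂ)
            * Dker n (θ - 2 * π * k / (2 * n + 2)) := by
  symm
  calc ∑ k ∈ Finset.range (2 * n + 2),
          ((q (2 * π * k / (2 * n + 2)) : ℝ) : ℂ)
            * Dker n (θ - 2 * π * k / (2 * n + 2))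
      = ∑ k ∈ Finset.range (2 * n + 2),
          (((a 0 : ℝ) : ℂ) * Dker n (θ - 2 * π * k / (2 * n + 2))
            + ∑ j ∈ Finset.Icc 1 n,
              (((a j : ℝ) : ℂ) * (((Real.cos ((j : ℝ) * (2 * π * k / (2 * n + 2))) : ℝ) : ℂ)
                  * Dker n (θ - 2 * π * k / (2 * n + 2)))
                + ((b j : ℝ) : ℂ) * (((Real.sin ((j : ℝ) * (2 * π * k / (2 * n + 2))) : ℝ) : ℂ)
                  * Dker n (θ - 2 * π * k / (2 * n + 2))))) := by
        refine Finset.sum_congr rfl fun k _ => ?_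
        rw [hq]
        push_cast
        rw [add_mul, Finset.sum_mul]
        congr 1
        refine Finset.sum_congr rfl fun j _ => ?_
        ring
    _ = ((a 0 : ℝ) : ℂ) * ∑ k ∈ Finset.range (2 * n + 2), Dker n (θ - 2 * π * k / (2 * n + 2))
        + ∑ j ∈ Finset.Icc 1 n,
          (((a j : ℝ) : ℂ) * ∑ k ∈ Finset.range (2 * n + 2),
              ((Real.cos ((j : ℝ) * (2 * π * k / (2 * n + 2))) : ℝ) : ℂ)
                * Dker n (θ - 2 * π * k / (2 * n + 2))
            + ((b j : ℝ) : ℂ) * ∑ k ∈ Finset.range (2 * n + 2),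
              ((Real.sin ((j : ℝ) * (2 * π * k / (2 * n + 2))) : ℝ) : ℂ)
                * Dker n (θ - 2 * π * k / (2 * n + 2))) := by
        rw [Finset.sum_add_distrib, ← Finset.mul_sum]
        congr 1
        rw [Finset.sum_comm]
        refine Finset.sum_congr rfl fun j _ => ?_
        rw [Finset.sum_add_distrib, ← Finset.mul_sum, ← Finset.mul_sum]
    _ = ((a 0 : ℝ) : ℂ) * ((2 * n + 2 : ℕ) : ℂ)
        + ∑ j ∈ Finset.Icc 1 n,
          (((a j : ℝ) : ℂ) * (((2 * n + 2 : ℕ) : ℂ) * ((Real.cos ((j : ℝ) * θ) : ℝ) : ℂ))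
            + ((b j : ℝ) : ℂ) * (((2 * n + 2 : ℕ) : ℂ) * ((Real.sin ((j : ℝ) * θ) : ℝ) : ℂ))) := by
        rw [one_sum]
        congr 1
        refine Finset.sum_congr rfl fun j hj => ?_
        rw [Finset.mem_Icc] at hj
        rw [cos_sum n hj.2 θ, sin_sum n hj.2 θ]
    _ = ((2 * n + 2 : ℕ) : ℂ) * ((q θ : ℝ) : ℂ) := by
        rw [hq θ]
        push_cast
        conv_rhs => rw [mul_add, Finset.mul_sum]
        congr 1
        · ring
        · refine Finset.sum_congr rfl fun j _ => ?_
          ring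


end WAMTrig

/-- Equispaced angles form a weakly admissible mesh for trigonometric polynomials:
there is `c > 0` such that for every `n ≥ 2` and every real trigonometric polynomial
`q(θ) = a₀ + Σ_{k=1}^n (a_k cos kθ + b_k sin kθ)` of degree at most `n`,
`sup_{θ ∈ [0,2π]} |q(θ)| ≤ c · log n · max_{0 ≤ k ≤ 2n+1} |q(kπ/(n+1))|`. -/
theorem trigPoly_equispaced_WAM :
    ∃ c : ℝ, 0 < c ∧
      ∀ n : ℕ, 2 ≤ n →
        ∀ a b : ℕ → ℝ,
          ∀ q : ℝ → ℝ,
            (∀ θ : ℝ, q θ = a 0 + ∑ k ∈ Finset.Icc 1 n,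
                (a k * Real.cos (k * θ) + b k * Real.sin (k * θ))) →
              ∀ M : ℝ, (∀ k : ℕ, k ≤ 2 * n + 1 → |q (k * Real.pi / (n + 1))| ≤ M) →
                ∀ θ ∈ Set.Icc (0 : ℝ) (2 * Real.pi), |q θ| ≤ c * Real.log n * M := by
  refine ⟨10, by norm_num, ?_⟩
  intro n hn a b q hq M hM θ hθ
  have hπ := Real.pi_pos
  have hn2 : (2:ℝ) ≤ (n:ℝ) := by exact_mod_cast hn
  have hM0 : 0 ≤ M := le_trans (abs_nonneg _) (hM 0 (by omega))
  have hNpos : (0:ℝ) < 2 * (n:ℝ) + 2 := by positivity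
  have hgrid : ∀ k : ℕ, k < 2 * n + 2 → |q (2 * π * (k:ℝ) / (2 * (n:ℝ) + 2))| ≤ M := by
    intro k hk
    have he : 2 * π * (k:ℝ) / (2 * (n:ℝ) + 2) = (k:ℝ) * π / ((n:ℝ) + 1) := by
      have h1 : (n:ℝ) + 1 ≠ 0 := by positivity
      field_simp
    rw [he]
    exact hM k (by omega)
  have hid := WAMTrig.reconstruct n a b q hq θ
  have hbound : (2 * (n:ℝ) + 2) * |q θ| ≤ M * WAMTrig.Leb n θ := by
    have hnorm : ‖((2 * n + 2 : ℕ) : ℂ) * ((q θ : ℝ) : ℂ)‖ = (2 * (n:ℝ) + 2) * |q θ| := by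
      rw [norm_mul, Complex.norm_real, Real.norm_eq_abs]
      congr 1
      rw [Complex.norm_natCast]
      push_cast
      ring
    calc (2 * (n:ℝ) + 2) * |q θ| = ‖((2 * n + 2 : ℕ) : ℂ) * ((q θ : ℝ) : ℂ)‖ := hnorm.symm
      _ = ‖∑ k ∈ Finset.range (2 * n + 2),
            ((q (2 * π * k / (2 * n + 2)) : ℝ) : ℂ)
              * WAMTrig.Dker n (θ - 2 * π * k / (2 * n + 2))‖ := by rw [hid]
      _ ≤ ∑ k ∈ Finset.range (2 * n + 2),
            ‖((q (2 * π * k / (2 * n + 2)) : ℝ) : ℂ)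
              * WAMTrig.Dker n (θ - 2 * π * k / (2 * n + 2))‖ := norm_sum_le _ _
      _ ≤ ∑ k ∈ Finset.range (2 * n + 2),
            M * ‖WAMTrig.Dker n (θ - 2 * π * k / (2 * n + 2))‖ := by
          refine Finset.sum_le_sum fun k hk => ?_
          rw [norm_mul, Complex.norm_real, Real.norm_eq_abs]
          exact mul_le_mul_of_nonneg_right (hgrid k (Finset.mem_range.mp hk)) (norm_nonneg _)
      _ = M * WAMTrig.Leb n θ := by rw [← Finset.mul_sum, WAMTrig.Leb]
  obtain ⟨hθ0, hθ2π⟩ := hθ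
  set h : ℝ := 2 * π / (2 * (n:ℝ) + 2) with hh
  have hhpos : 0 < h := by rw [hh]; positivity
  set j : ℕ := ⌊θ / h⌋₊ with hj
  have hj1 : (j:ℝ) * h ≤ θ := by
    have hfl : (j:ℝ) ≤ θ / h := Nat.floor_le (by positivity)
    calc (j:ℝ) * h ≤ (θ / h) * h := mul_le_mul_of_nonneg_right hfl hhpos.le
      _ = θ := by field_simp
  have hj2 : θ - (j:ℝ) * h ≤ h := by
    have hfl : θ / h < (j:ℝ) + 1 := by exact_mod_cast Nat.lt_floor_add_one (θ / h)
    have h2 : θ < ((j:ℝ) + 1) * h := by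
      calc θ = (θ / h) * h := by field_simp
        _ < ((j:ℝ) + 1) * h := mul_lt_mul_of_pos_right hfl hhpos
    nlinarith
  have hLeb1 : WAMTrig.Leb n θ = WAMTrig.Leb n (θ - (j:ℝ) * h) := by
    rw [hh]
    exact (WAMTrig.Leb_shift_nat n θ j).symm
  have hLeb2 : WAMTrig.Leb n (θ - (j:ℝ) * h)
      ≤ (2 * (n:ℝ) + 2) * (3 + Real.log (2 * (n:ℝ) + 2)) := by
    refine WAMTrig.Leb_le n (by linarith) ?_
    rw [← hh]
    exact hj2
  have h3 : |q θ| ≤ M * (3 + Real.log (2 * (n:ℝ) + 2)) := by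
    have hc : (2 * (n:ℝ) + 2) * |q θ|
        ≤ (2 * (n:ℝ) + 2) * (M * (3 + Real.log (2 * (n:ℝ) + 2))) := by
      calc (2 * (n:ℝ) + 2) * |q θ| ≤ M * WAMTrig.Leb n θ := hbound
        _ ≤ M * ((2 * (n:ℝ) + 2) * (3 + Real.log (2 * (n:ℝ) + 2))) := by
            apply mul_le_mul_of_nonneg_left _ hM0
            rw [hLeb1]
            exact hLeb2
        _ = (2 * (n:ℝ) + 2) * (M * (3 + Real.log (2 * (n:ℝ) + 2))) := by ring
    exact (mul_le_mul_iff_right₀ hNpos).mp hc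
  have hlogn : Real.log 2 ≤ Real.log n := Real.log_le_log (by norm_num) hn2
  have hlog2 : (0.6931471803 : ℝ) < Real.log 2 := Real.log_two_gt_d9
  have hcube : Real.log (2 * (n:ℝ) + 2) ≤ 3 * Real.log n := by
    have h1 : 2 * (n:ℝ) + 2 ≤ (n:ℝ) ^ 3 := by
      have hsq : (4:ℝ) ≤ (n:ℝ) ^ 2 := by nlinarith
      have hcub : 4 * (n:ℝ) ≤ (n:ℝ) ^ 3 := by
        nlinarith [mul_le_mul_of_nonneg_left hsq (by linarith : (0:ℝ) ≤ (n:ℝ))]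
      linarith
    calc Real.log (2 * (n:ℝ) + 2) ≤ Real.log ((n:ℝ) ^ 3) :=
          Real.log_le_log (by positivity) h1
      _ = 3 * Real.log n := by rw [Real.log_pow]; push_cast; ring
  have hlogn0 : 0 < Real.log n := lt_of_lt_of_le (by linarith) hlogn
  calc |q θ| ≤ M * (3 + Real.log (2 * (n:ℝ) + 2)) := h3
    _ ≤ M * (10 * Real.log n) := by
        apply mul_le_mul_of_nonneg_left _ hM0
        have h5 : (3:ℝ) ≤ 5 * Real.log n := by nlinarith
        linarith [hcube]
    _ = 10 * Real.log n * M := by ring
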